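/- Let V be a type, F : V → V → V an inport-aware forwarding function, and define step : V × V → V × V by step (u, v) = (v, F v u). Fix an initial directed link e : V × V, a destination t : V, and n : ℕ with (step^[n] e).2 = t. Then there exists a list p : List V such that p has no duplicate entries (List.Nodup p), p is nonempty, the head of p is e.1, the last element of p is t, and every consecutive pair (a, b) of p (element of p.zip p.tail) satisfies ∃ i ≤ n, step^[i] e = (a, b). -/

import Mathlib

private lemma zip_tail_drop_sublist {α : Type*} :
    ∀ (l : List α) (k : ℕ),
      List.Sublist ((l.drop k).zip (l.drop k).tail) (l.zip l.tail)
  | _, 0 => by simp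
  | [], _ + 1 => by simp
  | a :: xs, k + 1 => by
    simp only [List.drop_succ_cons]
    refine (zip_tail_drop_sublist xs k).trans ?_
    cases xs with
    | nil => simp
    | cons b ys =>
      simp only [List.tail_cons, List.zip_cons_cons]
      exact List.Sublist.cons _ (List.Sublist.refl _)

theorem stmt_10 {V : Type*} (F : V → V → V)
    (step : V × V → V × V) (hstep : ∀ u v : V, step (u, v) = (v, F v u))
    (e : V × V) (t : V) (n : ℕ) (hn : (step^[n] e).2 = t) :
    ∃ p : List V, List.Nodup p ∧ p ≠ [] ∧
      p.head? = some e.1 ∧ p.getLast? = some t ∧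
      ∀ ab ∈ p.zip p.tail, ∃ i ≤ n, step^[i] e = ab := by
  classical
  induction n generalizing e with
  | zero =>
    simp only [Function.iterate_zero, id_eq] at hn
    by_cases h : e.1 = e.2
    · exact ⟨[e.1], by simp, by simp, by simp, by simp [h, hn], by simp⟩
    · refine ⟨[e.1, e.2], by simp [h], by simp, by simp, by simp [hn], ?_⟩
      intro ab hab
      simp only [List.tail_cons, List.zip_cons_cons, List.zip_nil_right,
        List.mem_singleton] at hab
      exact ⟨0, le_refl 0, by simp [hab]⟩
  | succ n ih =>
    rw [Function.iterate_succ_apply] at hn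
    obtain ⟨p', hnd, hne, hhead, hlast, hedges⟩ := ih (step e) hn
    have hse : step e = (e.2, F e.2 e.1) := by
      have := hstep e.1 e.2; simpa using this
    have hh1 : (step e).1 = e.2 := by rw [hse]
    by_cases hmem : e.1 ∈ p'
    · set k := p'.idxOf e.1 with hk
      have hklt : k < p'.length := List.idxOf_lt_length_iff.2 hmem
      have hdne : p'.drop k ≠ [] := by
        intro h
        have := List.length_drop (i := k) (l := p')
        rw [h] at this; simp at this; omega
      refine ⟨p'.drop k, hnd.sublist (List.drop_sublist _ _), hdne, ?_, ?_, ?_⟩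
      · rw [List.head?_drop]
        simp [List.getElem?_eq_getElem hklt, hk, List.getElem_idxOf hklt, List.getElem?_idxOf hmem]
      · obtain ⟨l, hl⟩ := List.drop_suffix k p'
        have h2 := List.getLast?_append_of_ne_nil l (l₂ := p'.drop k) hdne
        rw [hl] at h2
        exact h2.symm.trans hlast
      · intro ab hab
        obtain ⟨i, hi, hab'⟩ :=
          hedges ab ((zip_tail_drop_sublist p' k).mem hab)
        exact ⟨i + 1, by omega, by rw [Function.iterate_succ_apply]; exact hab'⟩
    · obtain ⟨h', l', rfl⟩ := List.exists_cons_of_ne_nil hne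
      have hh' : h' = e.2 := by
        simp only [List.head?_cons, Option.some.injEq] at hhead
        rw [hhead, hh1]
      refine ⟨e.1 :: h' :: l', List.nodup_cons.2 ⟨hmem, hnd⟩, by simp, by simp,
        ?_, ?_⟩
      · rw [List.getLast?_cons_cons]
        cases l' with
        | nil => simpa using hlast
        | cons x xs => simpa using hlast
      · intro ab hab
        simp only [List.tail_cons, List.zip_cons_cons, List.mem_cons] at hab
        rcases hab with rfl | hab
        · exact ⟨0, by omega, by simp [hh', Prod.ext_iff]⟩
        · obtain ⟨i, hi, hab'⟩ := hedges ab (by simpa using hab)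
          exact ⟨i + 1, by omega, by rw [Function.iterate_succ_apply]; exact hab'⟩
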